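/- Let U ⊆ ℝ^r and V ⊆ ℝ^s be open with 0 ∈ V, and let F₀ : U×V → ℝ^{r×s} and G₀ : U×V → ℝ^{s×s} be C^∞ with G₀(x,y) invertible for all (x,y) ∈ U×V. Define ψ : U×V → ℝ^r by ψ(x,y) = x − F₀(x,y)G₀(x,y)^{-1}y, and the fast vector field v(x,y) = (F₀(x,y)y, G₀(x,y)y). Then the Lie derivative L(x,y) := Dψ(x,y)·v(x,y) vanishes to second order in y: L(x,0) = 0 and the partial derivative of L with respect to y satisfies D₂L(x,0) = 0 for all x ∈ U. In particular, each entry of ψ is a first integral of the fast system ẋ = F₀(x,y)y, ẏ = G₀(x,y)y up to terms of order two in y. -/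

import Mathlib

open Set Matrix

noncomputable def mulVecCLM (m n : ℕ) :
    (Fin m → Fin n → ℝ) →L[ℝ] (Fin n → ℝ) →L[ℝ] (Fin m → ℝ) :=
  LinearMap.toContinuousLinearMap
    ((LinearMap.toContinuousLinearMap.toLinearMap).comp
      ((Matrix.toLin' : Matrix (Fin m) (Fin n) ℝ ≃ₗ[ℝ] _).toLinearMap))

lemma mulVecCLM_apply (m n : ℕ) (A : Fin m → Fin n → ℝ) (w : Fin n → ℝ) :
    mulVecCLM m n A w = (Matrix.of A).mulVec w := by
  simp only [mulVecCLM, LinearMap.coe_toContinuousLinearMap', LinearMap.coe_comp,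
    LinearEquiv.coe_coe, Function.comp_apply]
  exact Matrix.toLin'_apply _ _

lemma aux_det {E : Type*} [NormedAddCommGroup E] [NormedSpace ℝ E] {m : ℕ}
    {H : E → Matrix (Fin m) (Fin m) ℝ} {s : Set E}
    (h : ∀ i j, ContDiffOn ℝ (⊤ : ℕ∞) (fun p => H p i j) s) :
    ContDiffOn ℝ (⊤ : ℕ∞) (fun p => (H p).det) s := by
  simp_rw [Matrix.det_apply']
  exact ContDiffOn.sum fun σ _ =>
    contDiffOn_const.mul (contDiffOn_prod fun i _ => h (σ i) i)

lemma aux_inv {E : Type*} [NormedAddCommGroup E] [NormedSpace ℝ E] {m : ℕ}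
    {H : E → Matrix (Fin m) (Fin m) ℝ} {s : Set E}
    (h : ∀ i j, ContDiffOn ℝ (⊤ : ℕ∞) (fun p => H p i j) s)
    (hinv : ∀ p ∈ s, IsUnit (H p)) (i j : Fin m) :
    ContDiffOn ℝ (⊤ : ℕ∞) (fun p => (H p)⁻¹ i j) s := by
  have hdet : ContDiffOn ℝ (⊤ : ℕ∞) (fun p => (H p).det) s := aux_det h
  have hdet_ne : ∀ p ∈ s, (H p).det ≠ 0 := fun p hp =>
    (((Matrix.isUnit_iff_isUnit_det (H p)).mp (hinv p hp))).ne_zero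
  have hadj : ContDiffOn ℝ (⊤ : ℕ∞) (fun p => (H p).adjugate i j) s := by
    simp_rw [Matrix.adjugate_apply]
    refine aux_det (H := fun p => (H p).updateRow j (Pi.single i 1)) fun k l => ?_
    simp_rw [Matrix.updateRow_apply]
    by_cases hk : k = j
    · simp only [hk, if_pos]
      exact contDiffOn_const
    · simpa [hk] using h k l
  have : ∀ p, (H p)⁻¹ i j = ((H p).det)⁻¹ * (H p).adjugate i j := by
    intro p
    rw [Matrix.inv_def, Ring.inverse_eq_inv']
    simp [Matrix.smul_apply, smul_eq_mul]
  simp_rw [this]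
  exact (hdet.inv hdet_ne).mul hadj

theorem stmt3 (r s : ℕ) (U : Set (Fin r → ℝ)) (V : Set (Fin s → ℝ))
    (hU : IsOpen U) (hV : IsOpen V) (hV0 : (0 : Fin s → ℝ) ∈ V)
    (F₀ : (Fin r → ℝ) × (Fin s → ℝ) → Matrix (Fin r) (Fin s) ℝ)
    (G₀ : (Fin r → ℝ) × (Fin s → ℝ) → Matrix (Fin s) (Fin s) ℝ)
    (hF₀ : ContDiffOn ℝ (⊤ : ℕ∞) (fun p i j => F₀ p i j) (U ×ˢ V))
    (hG₀ : ContDiffOn ℝ (⊤ : ℕ∞) (fun p i j => G₀ p i j) (U ×ˢ V))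
    (hGinv : ∀ p ∈ U ×ˢ V, IsUnit (G₀ p)) :
    let ψ : (Fin r → ℝ) × (Fin s → ℝ) → Fin r → ℝ :=
      fun p => p.1 - (F₀ p * (G₀ p)⁻¹).mulVec p.2
    let v : (Fin r → ℝ) × (Fin s → ℝ) → (Fin r → ℝ) × (Fin s → ℝ) :=
      fun p => ((F₀ p).mulVec p.2, (G₀ p).mulVec p.2)
    let L : (Fin r → ℝ) × (Fin s → ℝ) → Fin r → ℝ :=
      fun p => fderiv ℝ ψ p (v p)
    ∀ x ∈ U, L (x, 0) = 0 ∧ fderiv ℝ (fun y => L (x, y)) 0 = 0 := by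
  intro ψ v L x hx
  have hW : IsOpen (U ×ˢ V) := hU.prod hV
  have hxW : ((x, 0) : (Fin r → ℝ) × (Fin s → ℝ)) ∈ U ×ˢ V := ⟨hx, hV0⟩
  -- entries of F₀ and G₀
  have hFent : ∀ i j, ContDiffOn ℝ (⊤ : ℕ∞) (fun p => F₀ p i j) (U ×ˢ V) := fun i j =>
    contDiffOn_pi.mp (contDiffOn_pi.mp hF₀ i) j
  have hGent : ∀ i j, ContDiffOn ℝ (⊤ : ℕ∞) (fun p => G₀ p i j) (U ×ˢ V) := fun i j =>
    contDiffOn_pi.mp (contDiffOn_pi.mp hG₀ i) j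
  -- the matrix of ψ's second term, as a Pi-type valued map
  set N : (Fin r → ℝ) × (Fin s → ℝ) → Fin r → Fin s → ℝ :=
    fun p i j => (F₀ p * (G₀ p)⁻¹) i j with hNdef
  have hN : ContDiffOn ℝ (⊤ : ℕ∞) N (U ×ˢ V) := by
    rw [contDiffOn_pi]; intro i; rw [contDiffOn_pi]; intro j
    simp_rw [hNdef, Matrix.mul_apply]
    exact ContDiffOn.sum fun k _ => (hFent i k).mul (aux_inv hGent hGinv k j)
  set B : (Fin r → Fin s → ℝ) →L[ℝ] (Fin s → ℝ) →L[ℝ] (Fin r → ℝ) := mulVecCLM r s with hBdef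
  set B2 : (Fin s → Fin s → ℝ) →L[ℝ] (Fin s → ℝ) →L[ℝ] (Fin s → ℝ) := mulVecCLM s s with hB2def
  -- ψ rewritten
  have hψeq : ψ = fun p => p.1 - B (N p) p.2 := by
    funext p
    simp only [ψ, hBdef, mulVecCLM_apply]
    rfl
  -- derivative of L on U ×ˢ V
  have hLform : ∀ p ∈ U ×ˢ V, L p = -(B (fderiv ℝ N p (v p)) p.2) := by
    intro p hp
    have hNd : HasFDerivAt N (fderiv ℝ N p) p :=
      ((hN.contDiffAt (hW.mem_nhds hp)).differentiableAt (by simp)).hasFDerivAt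
    have hcd : HasFDerivAt (fun q => B (N q)) (B.comp (fderiv ℝ N p)) p :=
      B.hasFDerivAt.comp p hNd
    have hψd : HasFDerivAt ψ
        ((ContinuousLinearMap.fst ℝ (Fin r → ℝ) (Fin s → ℝ)) -
          ((B (N p)).comp (ContinuousLinearMap.snd ℝ (Fin r → ℝ) (Fin s → ℝ)) +
            (B.comp (fderiv ℝ N p)).flip p.2)) p := by
      rw [hψeq]
      exact (hasFDerivAt_fst).sub (hcd.clm_apply hasFDerivAt_snd)
    have hLval : L p = (v p).1 - (B (N p) (v p).2 + B (fderiv ℝ N p (v p)) p.2) := by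
      show fderiv ℝ ψ p (v p) = _
      rw [hψd.fderiv]
      simp [ContinuousLinearMap.sub_apply, ContinuousLinearMap.add_apply,
        ContinuousLinearMap.comp_apply, ContinuousLinearMap.flip_apply]
    rw [hLval]
    have hcancel : B (N p) (v p).2 = (v p).1 := by
      have hdu : IsUnit (G₀ p).det := (Matrix.isUnit_iff_isUnit_det (G₀ p)).mp (hGinv p hp)
      show B (N p) ((G₀ p).mulVec p.2) = (F₀ p).mulVec p.2
      rw [hBdef, mulVecCLM_apply]
      have : (Matrix.of (N p)) = F₀ p * (G₀ p)⁻¹ := rfl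
      rw [this, Matrix.mulVec_mulVec, Matrix.mul_assoc, Matrix.nonsing_inv_mul _ hdu, Matrix.mul_one]
    rw [hcancel]
    abel
  -- value of v at (x, 0)
  have hv0 : v (x, 0) = 0 := by
    simp only [v, Matrix.mulVec_zero]
    rfl
  constructor
  · show fderiv ℝ ψ (x, 0) (v (x, 0)) = 0
    rw [hv0, map_zero]
  · -- second part
    set Φ : (Fin s → ℝ) → Fin r → Fin s → ℝ :=
      fun y => fderiv ℝ N (x, y) (v (x, y)) with hΦdef
    have hgev : (fun y => L (x, y)) =ᶠ[nhds 0] fun y => -(B (Φ y) y) := by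
      filter_upwards [hV.mem_nhds hV0] with y hy
      exact hLform (x, y) ⟨hx, hy⟩
    rw [hgev.fderiv_eq]
    -- Φ is differentiable at 0, with Φ 0 = 0
    have hι : ContDiff ℝ (⊤ : ℕ∞) (fun y : Fin s → ℝ => ((x, y) : (Fin r → ℝ) × (Fin s → ℝ))) :=
      contDiff_const.prodMk contDiff_id
    have hDN : ContDiffOn ℝ (⊤ : ℕ∞) (fderiv ℝ N) (U ×ˢ V) :=
      hN.fderiv_of_isOpen hW (by simp)
    have hv : ContDiffOn ℝ (⊤ : ℕ∞) v (U ×ˢ V) := by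
      have h1 : ContDiffOn ℝ (⊤ : ℕ∞) (fun p : (Fin r → ℝ) × (Fin s → ℝ) =>
          B (fun i j => F₀ p i j) p.2) (U ×ˢ V) :=
        (B.contDiff.comp_contDiffOn hF₀).clm_apply (contDiff_snd.contDiffOn)
      have h2 : ContDiffOn ℝ (⊤ : ℕ∞) (fun p : (Fin r → ℝ) × (Fin s → ℝ) =>
          B2 (fun i j => G₀ p i j) p.2) (U ×ˢ V) :=
        (B2.contDiff.comp_contDiffOn hG₀).clm_apply (contDiff_snd.contDiffOn)
      have : v = fun p => (B (fun i j => F₀ p i j) p.2, B2 (fun i j => G₀ p i j) p.2) := by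
        funext p
        simp only [v, hBdef, hB2def, mulVecCLM_apply]
        rfl
      rw [this]
      exact h1.prodMk h2
    have hΦct : ContDiffAt ℝ (⊤ : ℕ∞) Φ 0 := by
      have hDN' : ContDiffAt ℝ (⊤ : ℕ∞) (fun y : Fin s → ℝ => fderiv ℝ N (x, y)) 0 :=
        (hDN.contDiffAt (hW.mem_nhds hxW)).comp 0 hι.contDiffAt
      have hv' : ContDiffAt ℝ (⊤ : ℕ∞) (fun y : Fin s → ℝ => v (x, y)) 0 :=
        ((hv.contDiffAt (hW.mem_nhds hxW)).comp 0 hι.contDiffAt)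
      exact hDN'.clm_apply hv'
    have hΦd : HasFDerivAt Φ (fderiv ℝ Φ 0) 0 :=
      ((hΦct.differentiableAt (by simp))).hasFDerivAt
    have hΦ0 : Φ 0 = 0 := by
      rw [hΦdef]
      simp only [hv0, map_zero]
    have hc0 : HasFDerivAt (fun y => B (Φ y)) (B.comp (fderiv ℝ Φ 0)) 0 :=
      B.hasFDerivAt.comp 0 hΦd
    have hfull := (hc0.clm_apply (hasFDerivAt_id 0)).neg
    have hzero : -((B (Φ 0)).comp (ContinuousLinearMap.id ℝ (Fin s → ℝ)) +
        (B.comp (fderiv ℝ Φ 0)).flip (id 0)) = 0 := by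
      ext h i
      simp [hΦ0, ContinuousLinearMap.flip_apply]
    rw [hzero] at hfull
    exact hfull.fderiv
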